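/- Let d ≥ 2 and let u* : ℝ^d → ℝ be a continuous radial function that is subharmonic on an open set A ⊂ ℝ^d \ {0} that is radially symmetric (i.e., x ∈ A and |y| = |x| implies y ∈ A). If (a,b) ⊂ (0,∞) is an interval with {x : a < |x| < b} ⊂ A, then the radial profile r ↦ u*(r) has no strict local maximum in (a,b); consequently there exists τ ∈ [a,b] such that u* is non-increasing on [a,τ] and non-decreasing on [τ,b]. -/

import Mathlib

open MeasureTheory Set

theorem radial_subharmonic_no_strict_local_max (d : ℕ) (hd : 2 ≤ d)
    (u : EuclideanSpace ℝ (Fin d) → ℝ) (hu : Continuous u)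
    (hrad : ∀ x y : EuclideanSpace ℝ (Fin d), ‖x‖ = ‖y‖ → u x = u y)
    (A : Set (EuclideanSpace ℝ (Fin d))) (hA : IsOpen A) (hA0 : (0 : EuclideanSpace ℝ (Fin d)) ∉ A)
    (hAsym : ∀ x y : EuclideanSpace ℝ (Fin d), x ∈ A → ‖y‖ = ‖x‖ → y ∈ A)
    (hsub : ∀ x ∈ A, ∃ ε > 0, ∀ r : ℝ, 0 < r → r < ε →
      u x ≤ ⨍ y in Metric.ball x r, u y)
    (U : ℝ → ℝ) (hU : ∀ x : EuclideanSpace ℝ (Fin d), u x = U ‖x‖)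
    (a b : ℝ) (h0a : 0 ≤ a) (hab : a < b)
    (hann : {x : EuclideanSpace ℝ (Fin d) | a < ‖x‖ ∧ ‖x‖ < b} ⊆ A) :
    (¬ ∃ t₀ ∈ Set.Ioo a b, ∃ c e : ℝ, a < c ∧ c < t₀ ∧ t₀ < e ∧ e < b ∧
        (∀ r ∈ Set.Ioo c e, U r ≤ U t₀) ∧ U c < U t₀ ∧ U e < U t₀) ∧
      ∃ τ ∈ Set.Icc a b, AntitoneOn U (Set.Icc a τ) ∧ MonotoneOn U (Set.Icc τ b) := by
  have hd0 : 0 < d := by omega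
  set v : EuclideanSpace ℝ (Fin d) := EuclideanSpace.single (⟨0, hd0⟩ : Fin d) (1 : ℝ) with hv
  have hvn : ‖v‖ = 1 := by rw [hv, EuclideanSpace.norm_single]; norm_num
  set g : ℝ → ℝ := fun r => u (r • v) with hgdef
  have hg : Continuous g := hu.comp (continuous_id.smul continuous_const)
  have hgU : ∀ r : ℝ, 0 ≤ r → g r = U r := by
    intro r hr
    have hn : ‖r • v‖ = r := by rw [norm_smul, hvn, mul_one, Real.norm_eq_abs, abs_of_nonneg hr]
    rw [hgdef]; simp only
    rw [hU, hn]
  -- open maximum principle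
  have key : ∀ s t : ℝ, a < s → t < b → ∀ r ∈ Set.Icc s t, g r ≤ max (g s) (g t) := by
    intro s t has htb r hr
    by_contra hcon
    push_neg at hcon
    have hst : s ≤ t := le_trans hr.1 hr.2
    obtain ⟨m, hm, hmax⟩ := isCompact_Icc.exists_isMaxOn (nonempty_Icc.mpr hst) hg.continuousOn
    set M := g m with hM
    have hMr : g r ≤ M := hmax hr
    have hMs : g s < M := lt_of_lt_of_le (lt_of_le_of_lt (le_max_left _ _) hcon) hMr
    have hMt : g t < M := lt_of_lt_of_le (lt_of_le_of_lt (le_max_right _ _) hcon) hMr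
    set K := Set.Icc s t ∩ g ⁻¹' {M} with hK
    have hKc : IsClosed K := isClosed_Icc.inter (isClosed_singleton.preimage hg)
    have hKne : K.Nonempty := ⟨m, hm, rfl⟩
    have hKbd : BddAbove K := bddAbove_Icc.mono Set.inter_subset_left
    set t₁ := sSup K with ht₁def
    have ht₁K : t₁ ∈ K := hKc.csSup_mem hKne hKbd
    have ht₁ : t₁ ∈ Set.Icc s t := ht₁K.1
    have hgt₁ : g t₁ = M := ht₁K.2
    have ht₁s : s < t₁ := lt_of_le_of_ne ht₁.1 (fun h => hMs.ne (by rw [h]; exact hgt₁))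
    have ht₁t : t₁ < t := lt_of_le_of_ne ht₁.2 (fun h => hMt.ne (by rw [← h]; exact hgt₁))
    have hstrict : ∀ r' : ℝ, t₁ < r' → r' ≤ t → g r' < M := by
      intro r' h1 h2
      refine lt_of_le_of_ne (hmax ⟨le_trans ht₁.1 h1.le, h2⟩) ?_
      intro h
      exact absurd (le_csSup hKbd ⟨⟨le_trans ht₁.1 h1.le, h2⟩, h⟩) (not_le.mpr h1)
    have ht₁0 : 0 ≤ t₁ := le_trans h0a (le_trans has.le ht₁.1)
    set x := t₁ • v with hxdef
    have hx : ‖x‖ = t₁ := by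
      rw [hxdef, norm_smul, hvn, mul_one, Real.norm_eq_abs, abs_of_nonneg ht₁0]
    have hxA : x ∈ A := hann ⟨by rw [hx]; exact lt_of_lt_of_le has ht₁.1,
      by rw [hx]; exact lt_of_le_of_lt ht₁.2 htb⟩
    obtain ⟨ε, hε, havg⟩ := hsub x hxA
    set ρ := min (ε / 2) (min ((t₁ - s) / 2) ((t - t₁) / 2)) with hρdef
    have hρ0 : 0 < ρ := by
      apply lt_min (by linarith) (lt_min (by linarith) (by linarith))
    have hρε : ρ < ε := lt_of_le_of_lt (min_le_left _ _) (by linarith)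
    have hρs : ρ ≤ (t₁ - s) / 2 := le_trans (min_le_right _ _) (min_le_left _ _)
    have hρt : ρ ≤ (t - t₁) / 2 := le_trans (min_le_right _ _) (min_le_right _ _)
    have hnorm : ∀ y ∈ Metric.ball x ρ, s ≤ ‖y‖ ∧ ‖y‖ ≤ t := by
      intro y hy
      have h1 : |‖y‖ - ‖x‖| ≤ ‖y - x‖ := abs_norm_sub_norm_le _ _
      have h2 : ‖y - x‖ < ρ := by rwa [Metric.mem_ball, dist_eq_norm] at hy
      rw [hx] at h1
      have h3 := abs_le.mp h1
      constructor
      · linarith [h3.1, h3.2]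
      · linarith [h3.1, h3.2]
    have hux : u x = M := hgt₁
    have hu_le : ∀ y ∈ Metric.ball x ρ, u y ≤ u x := by
      intro y hy
      obtain ⟨h1, h2⟩ := hnorm y hy
      have hyg : u y = g ‖y‖ := by
        rw [hU y, hgU ‖y‖ (norm_nonneg y)]
      rw [hyg, hux]
      exact hmax ⟨h1, h2⟩
    set y₀ := (t₁ + ρ / 2) • v with hy₀def
    have hy₀mem : y₀ ∈ Metric.ball x ρ := by
      rw [Metric.mem_ball, dist_eq_norm]
      have : y₀ - x = (ρ / 2) • v := by rw [hy₀def, hxdef, ← sub_smul]; ring_nf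
      rw [this, norm_smul, hvn, mul_one, Real.norm_eq_abs, abs_of_nonneg (by linarith)]
      linarith
    have hy₀lt : u y₀ < u x := by
      have : u y₀ = g (t₁ + ρ / 2) := rfl
      rw [this, hux]
      exact hstrict _ (by linarith) (by linarith)
    set B := Metric.ball x ρ with hB
    have hμpos : 0 < volume B := Metric.measure_ball_pos volume x hρ0
    have hμlt : volume B < ⊤ := measure_ball_lt_top
    have hint : IntegrableOn u B :=
      (hu.locallyIntegrable.integrableOn_isCompact (isCompact_closedBall x ρ)).mono_set
        Metric.ball_subset_closedBall
    have hcint : IntegrableOn (fun _ => u x) B := integrableOn_const hμlt.ne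
    have hfint : IntegrableOn (fun y => u x - u y) B := hcint.sub hint
    have hfpos : 0 < ∫ y in B, (u x - u y) := by
      rw [setIntegral_pos_iff_support_of_nonneg_ae ?_ hfint]
      · have hW : IsOpen ({y | u y < u x} ∩ B) :=
          (isOpen_lt hu continuous_const).inter Metric.isOpen_ball
        refine lt_of_lt_of_le (hW.measure_pos volume ⟨y₀, hy₀lt, hy₀mem⟩) (measure_mono ?_)
        rintro y ⟨h1, h2⟩
        simp only [Set.mem_setOf_eq] at h1
        refine ⟨?_, h2⟩
        simp only [Function.mem_support]
        intro h
        have h' := sub_eq_zero.mp h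
        linarith
      · exact Filter.Eventually.mono (ae_restrict_mem measurableSet_ball)
          fun y hy => sub_nonneg.mpr (hu_le y hy)
    have hIsub : ∫ y in B, u y < (volume B).toReal * u x := by
      have h1 : ∫ y in B, (u x - u y) = (volume B).toReal * u x - ∫ y in B, u y := by
        rw [integral_sub hcint hint, setIntegral_const, smul_eq_mul, measureReal_def]
      linarith
    have h2 : u x ≤ (volume B).toReal⁻¹ * ∫ y in B, u y := by
      have h := havg ρ hρ0 hρε
      rw [setAverage_eq, smul_eq_mul] at h
      exact h
    have hBpos : 0 < (volume B).toReal := ENNReal.toReal_pos hμpos.ne' hμlt.ne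
    have h3 : (volume B).toReal * u x ≤ ∫ y in B, u y := by
      have := mul_le_mul_of_nonneg_left h2 hBpos.le
      rwa [← mul_assoc, mul_inv_cancel₀ hBpos.ne', one_mul] at this
    linarith
  -- closed maximum principle for U
  have key2 : ∀ s r t : ℝ, a ≤ s → s ≤ r → r ≤ t → t ≤ b → U r ≤ max (U s) (U t) := by
    intro s r t has hsr hrt htb
    have h0s : 0 ≤ s := le_trans h0a has
    have h0r : 0 ≤ r := le_trans h0s hsr
    have h0t : 0 ≤ t := le_trans h0r hrt
    rcases eq_or_lt_of_le hsr with rfl | hsr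
    · exact le_max_left _ _
    rcases eq_or_lt_of_le hrt with rfl | hrt
    · exact le_max_right _ _
    by_contra hcon
    push_neg at hcon
    rw [← hgU s h0s, ← hgU r h0r, ← hgU t h0t] at hcon
    have hs' : ∃ s', s < s' ∧ s' < r ∧ g s' < g r := by
      have hev : ∀ᶠ z in nhds s, g z < g r :=
        (hg.tendsto s).eventually_lt_const (lt_of_le_of_lt (le_max_left _ _) hcon)
      rw [Metric.eventually_nhds_iff] at hev
      obtain ⟨δ, hδ, hδ'⟩ := hev
      have hm : 0 < min δ (r - s) := lt_min hδ (by linarith)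
      have hm1 := min_le_left δ (r - s)
      have hm2 := min_le_right δ (r - s)
      refine ⟨s + min δ (r - s) / 2, by linarith, by linarith, hδ' ?_⟩
      rw [Real.dist_eq, abs_of_nonneg (by linarith)]
      linarith
    have ht' : ∃ t', r < t' ∧ t' < t ∧ g t' < g r := by
      have hev : ∀ᶠ z in nhds t, g z < g r :=
        (hg.tendsto t).eventually_lt_const (lt_of_le_of_lt (le_max_right _ _) hcon)
      rw [Metric.eventually_nhds_iff] at hev
      obtain ⟨δ, hδ, hδ'⟩ := hev
      have hm : 0 < min δ (t - r) := lt_min hδ (by linarith)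
      have hm1 := min_le_left δ (t - r)
      have hm2 := min_le_right δ (t - r)
      refine ⟨t - min δ (t - r) / 2, by linarith, by linarith, hδ' ?_⟩
      rw [Real.dist_eq, abs_of_nonpos (by linarith)]
      linarith
    obtain ⟨s', hss', hs'r, hgs'⟩ := hs'
    obtain ⟨t', hrt', ht't, hgt'⟩ := ht'
    have := key s' t' (lt_of_le_of_lt has hss') (lt_of_lt_of_le ht't htb) r ⟨hs'r.le, hrt'.le⟩
    exact absurd this (not_le.mpr (max_lt hgs' hgt'))
  constructor
  · rintro ⟨t₀, ht₀, c, e, hac, hct, hte, heb, _, hc, he⟩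
    have := key2 c t₀ e hac.le hct.le hte.le heb.le
    exact absurd this (not_le.mpr (max_lt hc he))
  · obtain ⟨τ, hτ, hmin⟩ := isCompact_Icc.exists_isMinOn (nonempty_Icc.mpr hab.le) hg.continuousOn
    refine ⟨τ, hτ, ?_, ?_⟩
    · intro x hx y hy hxy
      have h1 := key2 x y τ hx.1 hxy hy.2 hτ.2
      have h2 : U τ ≤ U x := by
        rw [← hgU τ (le_trans h0a hτ.1), ← hgU x (le_trans h0a hx.1)]
        exact hmin ⟨hx.1, le_trans hx.2 hτ.2⟩
      rwa [max_eq_left h2] at h1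
    · intro x hx y hy hxy
      have h1 := key2 τ x y hτ.1 hx.1 hxy hy.2
      have h2 : U τ ≤ U y := by
        rw [← hgU τ (le_trans h0a hτ.1), ← hgU y (le_trans h0a (le_trans hτ.1 hy.1))]
        exact hmin ⟨le_trans hτ.1 hy.1, hy.2⟩
      rwa [max_eq_right h2] at h1
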